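/- Let f : Q → Q' be a diffeomorphism between quadrants Q ⊆ V and Q' ⊆ V' fixing nothing in particular, with Q defined by linear forms {ℓ_i}_{i=1}^r and Q' by {ℓ'_j}_{j=1}^r. Then the differential d₀f : V → V' at the origin (assuming 0 ∈ Q, f(0) = 0) is a linear isomorphism that maps Q onto Q' (as subsets of V and V'). -/

import Mathlib

open Set

/-- A map `f` is weakly smooth on a subset `A` if it admits a smooth extension
to an open neighborhood of `A`. -/
def WeaklySmooth {E F : Type*} [NormedAddCommGroup E] [NormedSpace ℝ E]
    [NormedAddCommGroup F] [NormedSpace ℝ F] (A : Set E) (f : E → F) : Prop :=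
  ∃ U : Set E, IsOpen U ∧ A ⊆ U ∧
    ∃ g : E → F, ContDiffOn ℝ (⊤ : ℕ∞) g U ∧ EqOn f g A

open Filter Topology

/-- A linearly independent family of linear functionals admits a common "positive" vector. -/
lemma exists_all_one {V : Type*} [AddCommGroup V] [Module ℝ V]
    {r : ℕ} {ℓ : Fin r → V →ₗ[ℝ] ℝ} (hℓ : LinearIndependent ℝ ℓ) :
    ∃ x : V, ∀ i, ℓ i x = 1 := by
  set L : V →ₗ[ℝ] (Fin r → ℝ) := LinearMap.pi ℓ with hL
  have hsurj : LinearMap.range L = ⊤ := by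
    by_contra hne
    obtain ⟨φ, hφ0, hφ⟩ := Submodule.exists_dual_map_eq_bot_of_lt_top
      (p := LinearMap.range L) (lt_top_iff_ne_top.mpr hne) inferInstance
    set c : Fin r → ℝ := fun i => φ (Pi.single i 1) with hc
    have hφw : ∀ w : Fin r → ℝ, φ w = ∑ i, w i * c i := by
      intro w
      have hw : w = ∑ i, Pi.single i (w i) := (Finset.univ_sum_single w).symm
      have hphi : φ w = ∑ i, φ (Pi.single i (w i)) := by
        conv_lhs => rw [hw]
        exact map_sum φ _ _
      rw [hphi]
      refine Finset.sum_congr rfl fun i _ => ?_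
      have : Pi.single i (w i) = w i • (Pi.single i 1 : Fin r → ℝ) := by
        funext j
        rcases eq_or_ne j i with h | h
        · subst h; simp
        · simp [Pi.single_eq_of_ne h]
      rw [this, map_smul, smul_eq_mul, hc]
    have hker : ∀ x : V, ∑ i, ℓ i x * c i = 0 := by
      intro x
      have hmem : φ (L x) ∈ (LinearMap.range L).map φ :=
        Submodule.mem_map_of_mem (LinearMap.mem_range_self L x)
      rw [hφ, Submodule.mem_bot] at hmem
      have := hφw (L x)
      simp only [hL, LinearMap.pi_apply] at this
      rw [hmem] at this
      exact this.symm
    have hcomb : ∀ i, c i = 0 := by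
      apply Fintype.linearIndependent_iff.mp hℓ
      ext x
      simp only [LinearMap.coe_sum, Finset.sum_apply, LinearMap.smul_apply,
        smul_eq_mul, LinearMap.zero_apply]
      rw [← hker x]
      exact Finset.sum_congr rfl fun i _ => mul_comm _ _
    apply hφ0
    apply LinearMap.ext
    intro w
    rw [hφw w]
    simp [hcomb]
  obtain ⟨x, hx⟩ := (LinearMap.range_eq_top.mp hsurj) (fun _ => (1:ℝ))
  exact ⟨x, fun i => congrFun hx i⟩

/-- The "open quadrant" is an open subset of the quadrant whose closure contains `0`. -/
lemma zero_mem_closure_pos {V : Type*} [NormedAddCommGroup V] [NormedSpace ℝ V]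
    [FiniteDimensional ℝ V] {r : ℕ} {ℓ : Fin r → V →ₗ[ℝ] ℝ}
    (hℓ : LinearIndependent ℝ ℓ) :
    ∃ S : Set V, IsOpen S ∧ S ⊆ {x | ∀ i, 0 ≤ ℓ i x} ∧ (0:V) ∈ closure S := by
  obtain ⟨x0, hx0⟩ := exists_all_one hℓ
  refine ⟨{x | ∀ i, 0 < ℓ i x}, ?_, fun x hx i => (hx i).le, ?_⟩
  · have : {x : V | ∀ i, 0 < ℓ i x} = ⋂ i, (ℓ i) ⁻¹' Ioi 0 := by
      ext x; simp [Set.mem_iInter]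
    rw [this]
    exact isOpen_iInter_of_finite fun i =>
      (IsOpen.preimage ((ℓ i).continuous_of_finiteDimensional) isOpen_Ioi)
  · have htend : Tendsto (fun t : ℝ => t • x0) (𝓝[>] 0) (𝓝 (0:V)) := by
      have : Tendsto (fun t : ℝ => t • x0) (𝓝 0) (𝓝 ((0:ℝ) • x0)) :=
        (continuous_id.smul continuous_const).tendsto 0
      rw [zero_smul] at this
      exact this.mono_left nhdsWithin_le_nhds
    refine mem_closure_of_tendsto htend ?_
    filter_upwards [self_mem_nhdsWithin] with t (ht : 0 < t) i
    rw [map_smul, smul_eq_mul, hx0 i, mul_one]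
    exact ht

/-- Chain rule at a boundary point approachable from an open subset where `G ∘ F = id`. -/
lemma comp_fderiv_eq_id {V V' : Type*} [NormedAddCommGroup V] [NormedSpace ℝ V]
    [NormedAddCommGroup V'] [NormedSpace ℝ V']
    {Q : Set V} {Q₂ : Set V'} {U : Set V} {U₂ : Set V'} {F : V → V'} {G : V' → V}
    (hU : IsOpen U) (hU₂ : IsOpen U₂) (hQU : Q ⊆ U) (hQ₂U₂ : Q₂ ⊆ U₂)
    (hF : ContDiffOn ℝ (⊤:ℕ∞) F U) (hG : ContDiffOn ℝ (⊤:ℕ∞) G U₂)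
    (hmap : Set.MapsTo F Q Q₂) (hid : ∀ x ∈ Q, G (F x) = x)
    {S : Set V} (hS : IsOpen S) (hSQ : S ⊆ Q) (h0S : (0:V) ∈ closure S)
    (h0Q : (0:V) ∈ Q) (hF0 : F 0 = 0) :
    (fderiv ℝ G 0).comp (fderiv ℝ F 0) = ContinuousLinearMap.id ℝ V := by
  set O : Set V := U ∩ F ⁻¹' U₂ with hO
  have hOopen : IsOpen O := hF.continuousOn.isOpen_inter_preimage hU hU₂
  have hQO : Q ⊆ O := fun x hx => ⟨hQU hx, hQ₂U₂ (hmap hx)⟩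
  set h : V → (V →L[ℝ] V) := fun x => (fderiv ℝ G (F x)).comp (fderiv ℝ F x) with hh
  have hF' : ContinuousOn (fderiv ℝ F) U :=
    hF.continuousOn_fderiv_of_isOpen hU (mod_cast le_top)
  have hG' : ContinuousOn (fderiv ℝ G) U₂ :=
    hG.continuousOn_fderiv_of_isOpen hU₂ (mod_cast le_top)
  have hcont : ContinuousOn h O := by
    apply ContinuousOn.clm_comp
    · exact hG'.comp (hF.continuousOn.mono inter_subset_left) (fun x hx => hx.2)
    · exact hF'.mono inter_subset_left
  have hid' : ∀ x ∈ S, h x = ContinuousLinearMap.id ℝ V := by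
    intro x hx
    have hxQ : x ∈ Q := hSQ hx
    have DF : DifferentiableAt ℝ F x :=
      (hF.differentiableOn (by simp)).differentiableAt (hU.mem_nhds (hQU hxQ))
    have DG : DifferentiableAt ℝ G (F x) :=
      (hG.differentiableOn (by simp)).differentiableAt
        (hU₂.mem_nhds (hQ₂U₂ (hmap hxQ)))
    have hcomp : fderiv ℝ (G ∘ F) x = (fderiv ℝ G (F x)).comp (fderiv ℝ F x) :=
      fderiv_comp x DG DF
    have heq : G ∘ F =ᶠ[𝓝 x] id :=
      Filter.eventuallyEq_of_mem (hS.mem_nhds hx) (fun y hy => hid y (hSQ hy))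
    have : fderiv ℝ (G ∘ F) x = fderiv ℝ (id : V → V) x := heq.fderiv_eq
    rw [fderiv_id] at this
    rw [hh]
    simp only
    rw [← hcomp, this]
  have h0O : (0:V) ∈ O := hQO h0Q
  have hca : ContinuousAt h 0 := hcont.continuousAt (hOopen.mem_nhds h0O)
  have hne : (𝓝[S] (0:V)).NeBot := mem_closure_iff_nhdsWithin_neBot.mp h0S
  have ht1 : Tendsto h (𝓝[S] 0) (𝓝 (h 0)) := hca.continuousWithinAt.tendsto
  have ht2 : Tendsto h (𝓝[S] 0) (𝓝 (ContinuousLinearMap.id ℝ V)) := by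
    exact Tendsto.congr' (eventually_mem_nhdsWithin.mono fun y hy => (hid' y hy).symm)
      tendsto_const_nhds
  have h0id : h 0 = ContinuousLinearMap.id ℝ V := tendsto_nhds_unique ht1 ht2
  rw [hh] at h0id
  simpa [hF0] using h0id

/-- The differential at `0` of a smooth map sending a cone `Q` into a closed cone `Q₂`
also sends `Q` into `Q₂`. -/
lemma fderiv_mapsTo_cone {V V' : Type*} [NormedAddCommGroup V] [NormedSpace ℝ V]
    [NormedAddCommGroup V'] [NormedSpace ℝ V'] [FiniteDimensional ℝ V']
    {r : ℕ} (ℓ' : Fin r → V' →ₗ[ℝ] ℝ)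
    {Q : Set V} {Q₂ : Set V'} {U : Set V} {F : V → V'}
    (hU : IsOpen U) (hQU : Q ⊆ U) (hF : ContDiffOn ℝ (⊤:ℕ∞) F U)
    (hQ₂ : Q₂ = {y | ∀ j, 0 ≤ ℓ' j y})
    (hmap : Set.MapsTo F Q Q₂)
    (hcone : ∀ t : ℝ, 0 < t → ∀ x ∈ Q, t • x ∈ Q)
    (h0Q : (0:V) ∈ Q) (hF0 : F 0 = 0) :
    Set.MapsTo (fderiv ℝ F 0) Q Q₂ := by
  intro x hx
  rw [hQ₂]
  intro j
  have DF : DifferentiableAt ℝ F 0 :=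
    (hF.differentiableOn (by simp)).differentiableAt (hU.mem_nhds (hQU h0Q))
  have hline : HasDerivAt (fun t : ℝ => t • x) x 0 := by
    simpa using (hasDerivAt_id (0:ℝ)).smul_const x
  have hc : HasDerivAt (fun t : ℝ => F (t • x)) (fderiv ℝ F 0 x) 0 := by
    have DF' : HasFDerivAt F (fderiv ℝ F 0) ((0:ℝ) • x) := by
      rw [zero_smul]; exact DF.hasFDerivAt
    simpa [Function.comp_def] using DF'.comp_hasDerivAt 0 hline
  have hslope : Tendsto (slope (fun t : ℝ => F (t • x) |> (ℓ' j)) 0) (𝓝[≠] (0:ℝ))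
      (𝓝 (ℓ' j (fderiv ℝ F 0 x))) := by
    have hcj : HasDerivAt (fun t : ℝ => ℓ' j (F (t • x))) (ℓ' j (fderiv ℝ F 0 x)) 0 := by
      simpa [Function.comp_def] using (((ℓ' j).toContinuousLinearMap).hasFDerivAt.comp_hasDerivAt 0 hc)
    exact hasDerivAt_iff_tendsto_slope.mp hcj
  have hslope' : Tendsto (slope (fun t : ℝ => ℓ' j (F (t • x))) 0) (𝓝[>] (0:ℝ))
      (𝓝 (ℓ' j (fderiv ℝ F 0 x))) :=
    hslope.mono_left (nhdsWithin_mono _ (fun t ht => ne_of_gt ht))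
  refine ge_of_tendsto hslope' ?_
  filter_upwards [self_mem_nhdsWithin] with t (ht : 0 < t)
  have htx : t • x ∈ Q := hcone t ht x hx
  have hmem : F (t • x) ∈ Q₂ := hmap htx
  rw [hQ₂] at hmem
  have h1 : 0 ≤ ℓ' j (F (t • x)) := hmem j
  rw [slope_def_field]
  simp only [zero_smul, hF0, map_zero, sub_zero]
  positivity

/-- Let `f : Q → Q'` be a diffeomorphism of quadrants with `f 0 = 0`.  The differential
of `f` at the origin (computed via any smooth local extension `F` of `f` to an open
neighborhood of `Q`) is a linear isomorphism `V → V'` mapping `Q` onto `Q'`. -/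
theorem quadrant_diffeo_differential_at_zero
    {V V' : Type*} [NormedAddCommGroup V] [NormedSpace ℝ V] [FiniteDimensional ℝ V]
    [NormedAddCommGroup V'] [NormedSpace ℝ V'] [FiniteDimensional ℝ V']
    {r : ℕ} (ℓ : Fin r → V →ₗ[ℝ] ℝ) (ℓ' : Fin r → V' →ₗ[ℝ] ℝ)
    (hℓ : LinearIndependent ℝ ℓ) (hℓ' : LinearIndependent ℝ ℓ')
    (Q : Set V) (Q' : Set V')
    (hQ : Q = {x | ∀ i, 0 ≤ ℓ i x}) (hQ' : Q' = {y | ∀ j, 0 ≤ ℓ' j y})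
    (f : V → V') (g : V' → V)
    (hf : WeaklySmooth Q f) (hg : WeaklySmooth Q' g)
    (hfQ : MapsTo f Q Q') (hgQ : MapsTo g Q' Q)
    (hgf : ∀ x ∈ Q, g (f x) = x) (hfg : ∀ y ∈ Q', f (g y) = y)
    (hf0 : f 0 = 0) :
    ∀ (U : Set V) (F : V → V'), IsOpen U → Q ⊆ U →
      ContDiffOn ℝ (⊤ : ℕ∞) F U → EqOn f F Q →
      Function.Bijective (fderiv ℝ F 0) ∧ (fderiv ℝ F 0) '' Q = Q' := by
  intro U F hUopen hQU hF hfF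
  obtain ⟨U₂, hU₂open, hQ'U₂, G, hG, hgG⟩ := hg
  have h0Q : (0:V) ∈ Q := by rw [hQ]; intro i; simp
  have h0Q' : (0:V') ∈ Q' := by
    have := hfQ h0Q; rwa [hf0] at this
  have hF0 : F 0 = 0 := by rw [← hfF h0Q, hf0]
  have hg0 : g 0 = 0 := by
    conv_lhs => rw [← hf0]
    exact hgf 0 h0Q
  have hG0 : G 0 = 0 := by rw [← hgG h0Q', hg0]
  have hFQ' : MapsTo F Q Q' := by
    intro x hx; rw [← hfF hx]; exact hfQ hx
  have hGQ : MapsTo G Q' Q := by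
    intro y hy; rw [← hgG hy]; exact hgQ hy
  have hGF : ∀ x ∈ Q, G (F x) = x := by
    intro x hx
    rw [← hfF hx, ← hgG (hfQ hx)]
    exact hgf x hx
  have hFG : ∀ y ∈ Q', F (G y) = y := by
    intro y hy
    rw [← hgG hy, ← hfF (hgQ hy)]
    exact hfg y hy
  have hconeQ : ∀ t : ℝ, 0 < t → ∀ x ∈ Q, t • x ∈ Q := by
    intro t ht x hx
    rw [hQ] at hx ⊢
    intro i
    rw [map_smul, smul_eq_mul]
    exact mul_nonneg ht.le (hx i)
  have hconeQ' : ∀ t : ℝ, 0 < t → ∀ y ∈ Q', t • y ∈ Q' := by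
    intro t ht y hy
    rw [hQ'] at hy ⊢
    intro j
    rw [map_smul, smul_eq_mul]
    exact mul_nonneg ht.le (hy j)
  obtain ⟨S, hSopen, hSsub, h0S⟩ := zero_mem_closure_pos hℓ
  have hSQ : S ⊆ Q := by rw [hQ]; exact hSsub
  obtain ⟨S', hS'open, hS'sub, h0S'⟩ := zero_mem_closure_pos hℓ'
  have hS'Q' : S' ⊆ Q' := by rw [hQ']; exact hS'sub
  set A := fderiv ℝ F 0 with hA
  set B := fderiv ℝ G 0 with hB
  have hBA : B.comp A = ContinuousLinearMap.id ℝ V :=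
    comp_fderiv_eq_id hUopen hU₂open hQU hQ'U₂ hF hG hFQ' hGF hSopen hSQ h0S h0Q hF0
  have hAB : A.comp B = ContinuousLinearMap.id ℝ V' := by
    have := comp_fderiv_eq_id hU₂open hUopen hQ'U₂ hQU hG hF hGQ hFG hS'open hS'Q'
      h0S' h0Q' hG0
    exact this
  have hleft : ∀ x : V, B (A x) = x := by
    intro x
    have := ContinuousLinearMap.ext_iff.mp hBA x
    simpa using this
  have hright : ∀ y : V', A (B y) = y := by
    intro y
    have := ContinuousLinearMap.ext_iff.mp hAB y
    simpa using this
  have hbij : Function.Bijective A :=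
    ⟨Function.LeftInverse.injective hleft, Function.RightInverse.surjective hright⟩
  have hAQ : MapsTo A Q Q' :=
    fderiv_mapsTo_cone ℓ' hUopen hQU hF hQ' hFQ' hconeQ h0Q hF0
  have hBQ' : MapsTo B Q' Q := by
    have := fderiv_mapsTo_cone ℓ hU₂open hQ'U₂ hG hQ hGQ hconeQ' h0Q' hG0
    exact this
  refine ⟨hbij, ?_⟩
  apply Set.Subset.antisymm
  · exact Set.MapsTo.image_subset hAQ
  · intro y hy
    exact ⟨B y, hBQ' hy, hright y⟩
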